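/- Let d ≥ 3, γ ∈ [−2, 0], and f ≥ 0 with ∫ f dv = 1 and ∫ f|v|² dv = d. For each unit vector e and v ∈ ℝ^d define a*_{f,γ,e}(v) = C(d,γ)∫ f(w)|v−w|^{2+γ}(Π(v−w)e,e) dw, where Π(z) = I − z⊗z/|z|² is the projection orthogonal to z. Then for v ≠ 0 and e = v/|v|, one has a*_{f,γ,e}(v) ≤ C·(1+|v|²)^{γ/2} for a constant C depending only on d, γ, and the mass and second moment of f. Consequently inf_e a*_{f,γ,e}(v) ≤ C⟨v⟩^γ. -/

import Mathlib

open MeasureTheory Metric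

lemma integrand_nonneg' {d : ℕ} (γ : ℝ) (v w e : EuclideanSpace ℝ (Fin d)) (he : ‖e‖ = 1) :
    0 ≤ ‖v - w‖ ^ (2 + γ) * (1 - (inner ℝ (v - w) e : ℝ) ^ 2 / ‖v - w‖ ^ 2) := by
  apply mul_nonneg (Real.rpow_nonneg (norm_nonneg _) _)
  rcases eq_or_ne (v - w) 0 with h | h
  · simp [h]
  · have hz : (0:ℝ) < ‖v - w‖ := norm_pos_iff.mpr h
    have hcs : |(inner ℝ (v - w) e : ℝ)| ≤ ‖v - w‖ := by
      simpa [he] using abs_real_inner_le_norm (v - w) e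
    have : (inner ℝ (v - w) e : ℝ) ^ 2 ≤ ‖v - w‖ ^ 2 := by
      rw [← sq_abs]; exact pow_le_pow_left₀ (abs_nonneg _) hcs 2
    have := div_le_one_of_le₀ this (by positivity)
    linarith

lemma sq_half_bound {a b : ℝ} (ha : 0 ≤ a) (h : a ≤ 1 + b) (hb : 0 ≤ b) :
    a ^ 2 ≤ 2 * (1 + b ^ 2) := by nlinarith [sq_nonneg (1 - b), sq_nonneg (a - b)]

lemma pointwise_bound {d : ℕ} (γ : ℝ) (hγ₁ : -2 ≤ γ) (hγ₂ : γ ≤ 0)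
    (v w : EuclideanSpace ℝ (Fin d)) (hv : v ≠ 0)
    (s : ℝ) (hs1 : 1 ≤ s) (hs2 : s ^ 2 = 1 + ‖v‖ ^ 2) :
    ‖v - w‖ ^ (2 + γ) * (1 - (inner ℝ (v - w) (‖v‖⁻¹ • v) : ℝ) ^ 2 / ‖v - w‖ ^ 2)
      ≤ (2:ℝ) ^ (1 - γ) * s ^ γ * (1 + ‖w‖ ^ 2) := by
  set e : EuclideanSpace ℝ (Fin d) := ‖v‖⁻¹ • v with he_def
  have hvn : (0:ℝ) < ‖v‖ := norm_pos_iff.mpr hv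
  have hs0 : (0:ℝ) < s := lt_of_lt_of_le one_pos hs1
  have hs3 : s ≤ 1 + ‖v‖ := by nlinarith
  -- inner product identities
  have hq : (inner ℝ (v - w) e : ℝ) ^ 2 = ‖v - w‖ ^ 2 - ‖w‖ ^ 2 + (inner ℝ w e : ℝ) ^ 2 := by
    have h1 : (inner ℝ (v - w) e : ℝ) = ‖v‖ - inner ℝ w e := by
      rw [inner_sub_left, he_def, real_inner_smul_right, real_inner_smul_right,
        real_inner_self_eq_norm_sq]
      field_simp
    have h2 : (inner ℝ v w : ℝ) = ‖v‖ * inner ℝ w e := by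
      rw [he_def, real_inner_smul_right, real_inner_comm w v]
      field_simp
    have h3 : ‖v - w‖ ^ 2 = ‖v‖ ^ 2 - 2 * inner ℝ v w + ‖w‖ ^ 2 := norm_sub_sq_real v w
    rw [h1]; nlinarith
  have he1 : ‖e‖ = 1 := norm_smul_inv_norm hv
  clear_value e
  clear he_def
  have hkey : ‖v - w‖ ^ 2 - (inner ℝ (v - w) e : ℝ) ^ 2 ≤ ‖w‖ ^ 2 := by
    nlinarith [sq_nonneg (inner ℝ w e : ℝ)]
  have hw2 : (0:ℝ) ≤ 1 + ‖w‖ ^ 2 := by positivity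
  have h2g : (2:ℝ) * (2:ℝ) ^ (-γ) = (2:ℝ) ^ (1 - γ) := by
    rw [show (1:ℝ) - γ = 1 + (-γ) by ring, Real.rpow_add (by norm_num), Real.rpow_one]
  rcases eq_or_ne (v - w) 0 with h | h
  · have hw : w = v := by rwa [sub_eq_zero, eq_comm] at h
    have hA : ‖v - w‖ ^ (2 + γ) * (1 - (inner ℝ (v - w) e : ℝ) ^ 2 / ‖v - w‖ ^ 2) ≤ 1 := by
      rw [h]
      simp only [norm_zero, inner_zero_left]
      rcases eq_or_ne (2 + γ) 0 with h0 | h0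
      · rw [h0, Real.rpow_zero]; norm_num
      · rw [Real.zero_rpow h0]; norm_num
    refine hA.trans ?_
    have hsg2 : 1 ≤ s ^ γ * s ^ 2 := by
      rw [← Real.rpow_natCast s 2, ← Real.rpow_add hs0]
      exact Real.one_le_rpow hs1 (by push_cast; linarith)
    have h21 : (1:ℝ) ≤ (2:ℝ) ^ (1 - γ) := Real.one_le_rpow one_le_two (by linarith)
    rw [hw, ← hs2]
    nlinarith [Real.rpow_nonneg (le_of_lt hs0) γ]
  · have hz : (0:ℝ) < ‖v - w‖ := norm_pos_iff.mpr h
    have hsplit : ‖v - w‖ ^ (2 + γ) * (1 - (inner ℝ (v - w) e : ℝ) ^ 2 / ‖v - w‖ ^ 2)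
        = ‖v - w‖ ^ γ * (‖v - w‖ ^ 2 - (inner ℝ (v - w) e : ℝ) ^ 2) := by
      rw [show (2:ℝ) + γ = γ + 2 by ring, Real.rpow_add hz,
        show ((2:ℝ)) = ((2:ℕ):ℝ) by norm_num, Real.rpow_natCast]
      field_simp
    rw [hsplit]
    have hnn : (0:ℝ) ≤ ‖v - w‖ ^ 2 - (inner ℝ (v - w) e : ℝ) ^ 2 := by
      have hcs : |(inner ℝ (v - w) e : ℝ)| ≤ ‖v - w‖ := by
        simpa [he1] using abs_real_inner_le_norm (v - w) e
      have : (inner ℝ (v - w) e : ℝ) ^ 2 ≤ ‖v - w‖ ^ 2 := by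
        rw [← sq_abs]; exact pow_le_pow_left₀ (abs_nonneg _) hcs 2
      linarith
    rcases le_or_gt (s / 2) ‖v - w‖ with hc | hc
    · have h1 : ‖v - w‖ ^ γ ≤ (s / 2) ^ γ :=
        Real.rpow_le_rpow_of_nonpos (by positivity) hc hγ₂
      have h2 : (s / 2) ^ γ = s ^ γ * 2 ^ (-γ) := by
        rw [Real.div_rpow (le_of_lt hs0) (by norm_num), Real.rpow_neg (by norm_num),
          div_eq_mul_inv]
      calc ‖v - w‖ ^ γ * (‖v - w‖ ^ 2 - (inner ℝ (v - w) e : ℝ) ^ 2)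
          ≤ (s / 2) ^ γ * (1 + ‖w‖ ^ 2) :=
            mul_le_mul h1 (by linarith) hnn (Real.rpow_nonneg (by positivity) γ)
        _ ≤ 2 ^ (1 - γ) * s ^ γ * (1 + ‖w‖ ^ 2) := by
            rw [h2]
            have h5 : (2:ℝ) ^ (-γ) ≤ 2 ^ (1 - γ) :=
              Real.rpow_le_rpow_of_exponent_le one_le_two (by linarith)
            have h6 : (0:ℝ) ≤ s ^ γ := Real.rpow_nonneg (le_of_lt hs0) γ
            calc s ^ γ * 2 ^ (-γ) * (1 + ‖w‖ ^ 2)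
                = (s ^ γ * (1 + ‖w‖ ^ 2)) * 2 ^ (-γ) := by ring
              _ ≤ (s ^ γ * (1 + ‖w‖ ^ 2)) * 2 ^ (1 - γ) :=
                  mul_le_mul_of_nonneg_left h5 (mul_nonneg h6 hw2)
              _ = 2 ^ (1 - γ) * s ^ γ * (1 + ‖w‖ ^ 2) := by ring
    · have hzz : ‖v - w‖ ^ γ * (‖v - w‖ ^ 2 - (inner ℝ (v - w) e : ℝ) ^ 2)
          ≤ ‖v - w‖ ^ (γ + 2) := by
        rw [Real.rpow_add hz, show ((2:ℝ)) = ((2:ℕ):ℝ) by norm_num, Real.rpow_natCast]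
        have h7 : (0:ℝ) ≤ ‖v - w‖ ^ γ := Real.rpow_nonneg (le_of_lt hz) γ
        exact mul_le_mul_of_nonneg_left (by nlinarith [sq_nonneg (inner ℝ (v - w) e : ℝ)]) h7
      have h1 : ‖v - w‖ ^ (γ + 2) ≤ (s / 2) ^ (γ + 2) :=
        Real.rpow_le_rpow hz.le (le_of_lt hc) (by linarith)
      have h2 : (s / 2) ^ (γ + 2) = (s / 2) ^ γ * (s / 2) ^ 2 := by
        rw [Real.rpow_add (by positivity), show ((2:ℝ)) = ((2:ℕ):ℝ) by norm_num,
          Real.rpow_natCast]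
      have hvw : ‖v‖ ≤ ‖w‖ + ‖v - w‖ := by
        have := norm_sub_norm_le v w
        linarith
      have hs4 : s / 2 ≤ 1 + ‖w‖ := by nlinarith
      have h3 : (s / 2) ^ 2 ≤ 2 * (1 + ‖w‖ ^ 2) :=
        sq_half_bound (by positivity) hs4 (norm_nonneg w)
      have h4 : (s / 2) ^ γ = s ^ γ * 2 ^ (-γ) := by
        rw [Real.div_rpow (le_of_lt hs0) (by norm_num), Real.rpow_neg (by norm_num),
          div_eq_mul_inv]
      calc ‖v - w‖ ^ γ * (‖v - w‖ ^ 2 - (inner ℝ (v - w) e : ℝ) ^ 2)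
          ≤ (s / 2) ^ (γ + 2) := hzz.trans h1
        _ = s ^ γ * 2 ^ (-γ) * (s / 2) ^ 2 := by rw [h2, h4]
        _ ≤ s ^ γ * 2 ^ (-γ) * (2 * (1 + ‖w‖ ^ 2)) := by
            exact mul_le_mul_of_nonneg_left h3
              (mul_nonneg (Real.rpow_nonneg (le_of_lt hs0) γ) (Real.rpow_nonneg zero_le_two _))
        _ = 2 ^ (1 - γ) * s ^ γ * (1 + ‖w‖ ^ 2) := by rw [← h2g]; ring

/-- The directional Landau coefficient
`a*_{f,γ,e}(v) = ∫ f(w)‖v-w‖^{2+γ}(Π(v-w)e,e) dw`, where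
`(Π(z)e,e) = 1 - ⟪z,e⟫²/‖z‖²` is the projection orthogonal to `z` evaluated at `e`
(normalization constant omitted). -/
noncomputable def aStarDir (d : ℕ) (γ : ℝ) (f : EuclideanSpace ℝ (Fin d) → ℝ)
    (e v : EuclideanSpace ℝ (Fin d)) : ℝ :=
  ∫ w, f w * ‖v - w‖ ^ (2 + γ) *
    (1 - (inner ℝ (v - w) e : ℝ) ^ 2 / ‖v - w‖ ^ 2)

/-- For `d ≥ 3`, `γ ∈ [-2,0]`, `f ≥ 0` with unit mass and second moment `d`:
for `v ≠ 0` and `e = v/‖v‖` one has `a*_{f,γ,e}(v) ≤ C ⟨v⟩^γ`, with `C = C(d,γ)`;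
consequently `inf_{‖e‖=1} a*_{f,γ,e}(v) ≤ C ⟨v⟩^γ`. -/
theorem aStar_radial_direction_upper_bound (d : ℕ) (hd : 3 ≤ d) (γ : ℝ)
    (hγ₁ : -2 ≤ γ) (hγ₂ : γ ≤ 0) :
    ∃ C : ℝ, 0 < C ∧
      ∀ f : EuclideanSpace ℝ (Fin d) → ℝ,
        (∀ v, 0 ≤ f v) → Integrable f → (∫ v, f v) = 1 →
        Integrable (fun v => f v * ‖v‖ ^ 2) → (∫ v, f v * ‖v‖ ^ 2) = d →
        ∀ v : EuclideanSpace ℝ (Fin d), v ≠ 0 →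
          aStarDir d γ f (‖v‖⁻¹ • v) v ≤ C * (1 + ‖v‖ ^ 2) ^ (γ / 2) ∧
          sInf {x : ℝ | ∃ e : EuclideanSpace ℝ (Fin d), ‖e‖ = 1 ∧ x = aStarDir d γ f e v} ≤
            C * (1 + ‖v‖ ^ 2) ^ (γ / 2) := by
  refine ⟨2 ^ (1 - γ) * (1 + d), by positivity, ?_⟩
  intro f hf hfi hm hfi2 hm2 v hv
  have he : ‖(‖v‖⁻¹ • v : EuclideanSpace ℝ (Fin d))‖ = 1 := norm_smul_inv_norm hv
  set s : ℝ := (1 + ‖v‖ ^ 2) ^ ((1:ℝ)/2) with hs_def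
  have hb : (0:ℝ) < 1 + ‖v‖ ^ 2 := by positivity
  have hs1 : 1 ≤ s := Real.one_le_rpow (by nlinarith [sq_nonneg ‖v‖]) (by norm_num)
  have hs2 : s ^ 2 = 1 + ‖v‖ ^ 2 := by
    rw [hs_def, ← Real.rpow_natCast ((1 + ‖v‖ ^ 2) ^ ((1:ℝ)/2)) 2,
      ← Real.rpow_mul (le_of_lt hb)]
    norm_num
  have hsg : s ^ γ = (1 + ‖v‖ ^ 2) ^ (γ / 2) := by
    rw [hs_def, ← Real.rpow_mul (le_of_lt hb)]
    ring_nf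
  set c : ℝ := 2 ^ (1 - γ) * (1 + ‖v‖ ^ 2) ^ (γ / 2) with hc_def
  have hc0 : 0 ≤ c := by positivity
  have h1 : (fun w => c * (f w * (1 + ‖w‖ ^ 2)))
      = fun w => c * f w + c * (f w * ‖w‖ ^ 2) := by funext w; ring
  have hint : Integrable (fun w => c * (f w * (1 + ‖w‖ ^ 2))) := by
    rw [h1]; exact (hfi.const_mul c).add (hfi2.const_mul c)
  have hmain : aStarDir d γ f (‖v‖⁻¹ • v) v ≤ 2 ^ (1 - γ) * (1 + d) * (1 + ‖v‖ ^ 2) ^ (γ / 2) := by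
    have hle : aStarDir d γ f (‖v‖⁻¹ • v) v ≤ ∫ w, c * (f w * (1 + ‖w‖ ^ 2)) := by
      apply integral_mono_of_nonneg
      · filter_upwards with w
        exact mul_nonneg (mul_nonneg (hf w) (Real.rpow_nonneg (norm_nonneg _) _))
          (by
            have := integrand_nonneg' γ v w (‖v‖⁻¹ • v) he
            rcases eq_or_ne (v - w) 0 with h | h
            · simp [h]
            · have hz : (0:ℝ) < ‖v - w‖ := norm_pos_iff.mpr h
              have hcs : |(inner ℝ (v - w) (‖v‖⁻¹ • v) : ℝ)| ≤ ‖v - w‖ := by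
                simpa [he] using abs_real_inner_le_norm (v - w) (‖v‖⁻¹ • v)
              have h2 : (inner ℝ (v - w) (‖v‖⁻¹ • v) : ℝ) ^ 2 ≤ ‖v - w‖ ^ 2 := by
                rw [← sq_abs]; exact pow_le_pow_left₀ (abs_nonneg _) hcs 2
              have := div_le_one_of_le₀ h2 (by positivity)
              linarith)
      · exact hint
      · filter_upwards with w
        have hA := pointwise_bound γ hγ₁ hγ₂ v w hv s hs1 hs2
        calc f w * ‖v - w‖ ^ (2 + γ) * (1 - (inner ℝ (v - w) (‖v‖⁻¹ • v) : ℝ) ^ 2 / ‖v - w‖ ^ 2)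
            = f w * (‖v - w‖ ^ (2 + γ) *
                (1 - (inner ℝ (v - w) (‖v‖⁻¹ • v) : ℝ) ^ 2 / ‖v - w‖ ^ 2)) := by ring
          _ ≤ f w * (2 ^ (1 - γ) * s ^ γ * (1 + ‖w‖ ^ 2)) :=
              mul_le_mul_of_nonneg_left hA (hf w)
          _ = c * (f w * (1 + ‖w‖ ^ 2)) := by rw [hsg] at *; rw [hc_def]; ring
    have heq : ∫ w, c * (f w * (1 + ‖w‖ ^ 2)) = c * (1 + d) := by
      rw [h1, integral_add (hfi.const_mul c) (hfi2.const_mul c), integral_const_mul,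
        integral_const_mul, hm, hm2]
      ring
    rw [heq] at hle
    calc aStarDir d γ f (‖v‖⁻¹ • v) v ≤ c * (1 + d) := hle
      _ = 2 ^ (1 - γ) * (1 + d) * (1 + ‖v‖ ^ 2) ^ (γ / 2) := by rw [hc_def]; ring
  refine ⟨hmain, ?_⟩
  refine csInf_le_of_le ⟨0, ?_⟩ ⟨‖v‖⁻¹ • v, he, rfl⟩ hmain
  rintro x ⟨e, he1, rfl⟩
  apply integral_nonneg
  intro w
  exact mul_nonneg (mul_nonneg (hf w) (Real.rpow_nonneg (norm_nonneg _) _))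
    (by
      have := integrand_nonneg' γ v w e he1
      have h2 := mul_nonneg (Real.rpow_nonneg (norm_nonneg (v - w)) (2 + γ)) (le_refl (0:ℝ))
      rcases eq_or_ne (v - w) 0 with h | h
      · simp [h]
      · have hz : (0:ℝ) < ‖v - w‖ := norm_pos_iff.mpr h
        have hcs : |(inner ℝ (v - w) e : ℝ)| ≤ ‖v - w‖ := by
          simpa [he1] using abs_real_inner_le_norm (v - w) e
        have h3 : (inner ℝ (v - w) e : ℝ) ^ 2 ≤ ‖v - w‖ ^ 2 := by
          rw [← sq_abs]; exact pow_le_pow_left₀ (abs_nonneg _) hcs 2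
        have := div_le_one_of_le₀ h3 (by positivity)
        linarith)
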